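/- arXiv:2402.02998 — 2 statements merged into one kernel-verified Lean document; each statement's English description precedes it below -/
import Mathlib

section
/- Let L_main be C² with M-Lipschitz Hessian and g_main = ∇L_main(θ) ≠ 0, g_aux = ∇L_aux(θ). Suppose there exists θ* with ∇L_main(θ*) = 0 and ‖θ - θ*‖ ≤ c ‖g_main‖. If the Bloop direction d = g_main + λ π(g_aux; g_main) (λ > 0) satisfies ‖d‖ ≤ ε, then with v = (⟨g_aux, g_main⟩/‖g_main‖²)(θ - θ*) we have ‖g_aux - ∇²L_main(θ) v‖ ≤ (λ⁻¹ + M c² ‖g_aux‖ / 2) ε. -/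
open RealInnerProductSpace

lemma second_order_bound {E : Type*} [NormedAddCommGroup E] [NormedSpace ℝ E] [CompleteSpace E]
    (f : E → E) (M : ℝ)
    (hdiff : Differentiable ℝ f)
    (hLip : ∀ x y, ‖fderiv ℝ f x - fderiv ℝ f y‖ ≤ M * ‖x - y‖)
    (a b : E) :
    ‖f a - f b - fderiv ℝ f a (a - b)‖ ≤ M / 2 * ‖a - b‖ ^ 2 := by
  set u := a - b with hu
  set g : ℝ → E := fun t => f (b + t • u) - t • (fderiv ℝ f a u) with hg
  set g' : ℝ → E := fun t => fderiv ℝ f (b + t • u) u - fderiv ℝ f a u with hg'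
  have hderiv : ∀ t : ℝ, HasDerivAt g (g' t) t := by
    intro t
    have h1 : HasDerivAt (fun t : ℝ => b + t • u) u t := by
      simpa using ((hasDerivAt_id t).smul_const u).const_add b
    have h2 : HasDerivAt (fun t : ℝ => f (b + t • u)) (fderiv ℝ f (b + t • u) u) t :=
      (hdiff (b + t • u)).hasFDerivAt.comp_hasDerivAt t h1
    have h3 : HasDerivAt (fun t : ℝ => t • (fderiv ℝ f a u)) (fderiv ℝ f a u) t := by
      simpa using (hasDerivAt_id t).smul_const (fderiv ℝ f a u)
    exact h2.sub h3
  have hcontf : Continuous fun x => fderiv ℝ f x := by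
    apply LipschitzWith.continuous (K := M.toNNReal)
    apply LipschitzWith.of_dist_le_mul
    intro x y
    rw [dist_eq_norm, dist_eq_norm]
    calc ‖fderiv ℝ f x - fderiv ℝ f y‖ ≤ M * ‖x - y‖ := hLip x y
      _ ≤ M.toNNReal * ‖x - y‖ :=
          mul_le_mul_of_nonneg_right (Real.le_coe_toNNReal M) (norm_nonneg _)
  have hcontg' : Continuous g' := by
    apply Continuous.sub _ continuous_const
    exact (hcontf.comp (continuous_const.add (continuous_id.smul continuous_const))).clm_apply
      continuous_const
  have hint : ∫ t in (0:ℝ)..1, g' t = g 1 - g 0 :=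
    intervalIntegral.integral_eq_sub_of_hasDerivAt (fun t _ => hderiv t)
      (hcontg'.intervalIntegrable 0 1)
  have hbound : ∀ t ∈ Set.Ioc (0:ℝ) 1, ‖g' t‖ ≤ M * ‖u‖ ^ 2 * (1 - t) := by
    intro t ht
    have h1 : ‖g' t‖ ≤ ‖fderiv ℝ f (b + t • u) - fderiv ℝ f a‖ * ‖u‖ := by
      have := (fderiv ℝ f (b + t • u) - fderiv ℝ f a).le_opNorm u
      simpa [hg'] using this
    have h2 : b + t • u - a = (t - 1) • u := by
      rw [hu]; module
    have h3 : ‖fderiv ℝ f (b + t • u) - fderiv ℝ f a‖ ≤ M * ((1 - t) * ‖u‖) := by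
      have := hLip (b + t • u) a
      rw [h2, norm_smul] at this
      simpa [abs_of_nonpos (by linarith [ht.2] : t - 1 ≤ 0)] using this
    calc ‖g' t‖ ≤ ‖fderiv ℝ f (b + t • u) - fderiv ℝ f a‖ * ‖u‖ := h1
      _ ≤ M * ((1 - t) * ‖u‖) * ‖u‖ :=
          mul_le_mul_of_nonneg_right h3 (norm_nonneg _)
      _ = M * ‖u‖ ^ 2 * (1 - t) := by ring
  have hMu : 0 ≤ M * ‖u‖ ^ 2 := by
    have h0 := (norm_nonneg (g' (1/2))).trans (hbound (1/2) (by norm_num))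
    linarith
  have hmain : ‖g 1 - g 0‖ ≤ M / 2 * ‖u‖ ^ 2 := by
    rw [← hint]
    have hcalc : ∫ t in (0:ℝ)..1, M * ‖u‖ ^ 2 * (1 - t) = M / 2 * ‖u‖ ^ 2 := by
      rw [intervalIntegral.integral_const_mul,
        intervalIntegral.integral_sub intervalIntegrable_const intervalIntegral.intervalIntegrable_id,
        integral_id, integral_one]
      ring
    have hle : ‖∫ t in (0:ℝ)..1, g' t‖ ≤ |∫ t in (0:ℝ)..1, M * ‖u‖ ^ 2 * (1 - t)| := by
      apply intervalIntegral.norm_integral_le_abs_of_norm_le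
      · filter_upwards [MeasureTheory.ae_restrict_mem measurableSet_uIoc] with t ht
        have ht' : t ∈ Set.Ioc (0:ℝ) 1 := by
          simpa [Set.uIoc_of_le (by norm_num : (0:ℝ) ≤ 1)] using ht
        exact hbound t ht'
      · exact (continuous_const.mul (continuous_const.sub continuous_id)).intervalIntegrable _ _
    rw [hcalc, abs_of_nonneg (by linarith)] at hle
    exact hle
  have hgval : g 1 - g 0 = f a - f b - fderiv ℝ f a (a - b) := by
    simp [hg, hu]
    abel
  rw [← hgval]
  exact hmain

set_option maxHeartbeats 1000000 in
theorem bloop_near_stationary (p : ℕ)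
    (Lmain : EuclideanSpace ℝ (Fin p) → ℝ) (M c lam ε : ℝ)
    (hC2 : ContDiff ℝ 2 Lmain)
    (hLip : ∀ x y, ‖fderiv ℝ (gradient Lmain) x - fderiv ℝ (gradient Lmain) y‖ ≤ M * ‖x - y‖)
    (hc : 0 < c) (hlam : 0 < lam) (hε : 0 < ε)
    (θ θs : EuclideanSpace ℝ (Fin p))
    (gmain gaux : EuclideanSpace ℝ (Fin p))
    (hgmain : gmain = gradient Lmain θ) (hgm : gmain ≠ 0)
    (hcrit : gradient Lmain θs = 0) (herr : ‖θ - θs‖ ≤ c * ‖gmain‖)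
    (d : EuclideanSpace ℝ (Fin p))
    (hd : d = gmain + lam • (gaux - (⟪gaux, gmain⟫ / ‖gmain‖ ^ 2) • gmain))
    (hdsmall : ‖d‖ ≤ ε)
    (v : EuclideanSpace ℝ (Fin p))
    (hv : v = (⟪gaux, gmain⟫ / ‖gmain‖ ^ 2) • (θ - θs)) :
    ‖gaux - fderiv ℝ (gradient Lmain) θ v‖ ≤ (lam⁻¹ + M * c ^ 2 * ‖gaux‖ / 2) * ε := by
  set f := gradient Lmain with hf
  set α : ℝ := ⟪gaux, gmain⟫ / ‖gmain‖ ^ 2 with hα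
  set π : EuclideanSpace ℝ (Fin p) := gaux - α • gmain with hπ
  have hgm_pos : (0:ℝ) < ‖gmain‖ := norm_pos_iff.mpr hgm
  -- differentiability of the gradient
  have hdiff : Differentiable ℝ f := by
    have h1 : ContDiff ℝ 1 (fderiv ℝ Lmain) := hC2.fderiv_right (by norm_num)
    have h2 : ContDiff ℝ 1 f := by
      have := ((InnerProductSpace.toDual ℝ
        (EuclideanSpace ℝ (Fin p))).symm.toContinuousLinearEquiv.contDiff (n := 1)).comp h1
      exact this
    exact h2.differentiable one_ne_zero
  -- orthogonality and Pythagoras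
  have hgm2 : (0:ℝ) < ‖gmain‖ ^ 2 := by positivity
  have horth : ⟪gmain, lam • π⟫ = 0 := by
    rw [hπ, real_inner_smul_right, inner_sub_right, real_inner_smul_right,
      real_inner_self_eq_norm_sq]
    have h5 : α * ‖gmain‖ ^ 2 = ⟪gmain, gaux⟫ := by
      rw [hα, real_inner_comm gmain gaux]
      field_simp
    rw [h5]
    ring
  have hpyth : ‖d‖ ^ 2 = ‖gmain‖ ^ 2 + ‖lam • π‖ ^ 2 := by
    rw [hd, norm_add_sq_real, horth]
    ring
  have hgm_le : ‖gmain‖ ≤ ε := by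
    nlinarith [norm_nonneg (lam • π), norm_nonneg d, norm_nonneg gmain, hdsmall, hε.le]
  have hπ_le : ‖π‖ ≤ lam⁻¹ * ε := by
    have h1 : lam * ‖π‖ ≤ ε := by
      have h2 : ‖lam • π‖ ≤ ε := by
        nlinarith [norm_nonneg (lam • π), norm_nonneg d, norm_nonneg gmain, hdsmall, hε.le]
      rw [norm_smul, Real.norm_eq_abs, abs_of_pos hlam] at h2
      linarith
    rw [inv_mul_eq_div, le_div_iff₀ hlam]
    linarith
  -- Taylor bound
  have htaylor : ‖gmain - fderiv ℝ f θ (θ - θs)‖ ≤ M / 2 * ‖θ - θs‖ ^ 2 := by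
    have := second_order_bound f M hdiff hLip θ θs
    rw [hcrit] at this
    simpa [hgmain] using this
  -- M ≥ 0
  have hθne : θ ≠ θs := by
    intro h; apply hgm; rw [hgmain, h, hcrit]
  have hM : 0 ≤ M := by
    have h1 := hLip θ θs
    have h2 : (0:ℝ) < ‖θ - θs‖ := by
      rw [norm_pos_iff, sub_ne_zero]; exact hθne
    have h3 : (0:ℝ) ≤ M * ‖θ - θs‖ :=
      (norm_nonneg (fderiv ℝ f θ - fderiv ℝ f θs)).trans h1
    have h4 : 0 * ‖θ - θs‖ ≤ M * ‖θ - θs‖ := by simpa using h3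
    exact le_of_mul_le_mul_right h4 h2
  -- |α| bound
  have hαabs : |α| ≤ ‖gaux‖ / ‖gmain‖ := by
    rw [hα, abs_div, abs_of_nonneg (by positivity : (0:ℝ) ≤ ‖gmain‖ ^ 2), div_le_div_iff₀
      (by positivity) hgm_pos]
    calc |⟪gaux, gmain⟫| * ‖gmain‖ ≤ ‖gaux‖ * ‖gmain‖ * ‖gmain‖ :=
          mul_le_mul_of_nonneg_right (abs_real_inner_le_norm _ _) (norm_nonneg _)
      _ = ‖gaux‖ * ‖gmain‖ ^ 2 := by ring
  -- decomposition
  have hdecomp : gaux - fderiv ℝ f θ v = π + α • (gmain - fderiv ℝ f θ (θ - θs)) := by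
    rw [hv, map_smul, smul_sub, hπ]
    abel
  set T : EuclideanSpace ℝ (Fin p) := gmain - fderiv ℝ f θ (θ - θs) with hT
  have hT1 : ‖T‖ ≤ M / 2 * (c * ‖gmain‖) ^ 2 := by
    refine htaylor.trans ?_
    have : ‖θ - θs‖ ^ 2 ≤ (c * ‖gmain‖) ^ 2 :=
      pow_le_pow_left₀ (norm_nonneg _) herr 2
    nlinarith
  have h6 : ‖α • T‖ ≤ ‖gaux‖ / ‖gmain‖ * (M / 2 * (c * ‖gmain‖) ^ 2) := by
    rw [norm_smul, Real.norm_eq_abs]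
    exact mul_le_mul hαabs hT1 (norm_nonneg _) (by positivity)
  have h7 : ‖gaux‖ / ‖gmain‖ * (M / 2 * (c * ‖gmain‖) ^ 2)
      = M * c ^ 2 * ‖gaux‖ / 2 * ‖gmain‖ := by
    field_simp
  have h8 : M * c ^ 2 * ‖gaux‖ / 2 * ‖gmain‖ ≤ M * c ^ 2 * ‖gaux‖ / 2 * ε := by
    have : (0:ℝ) ≤ M * c ^ 2 * ‖gaux‖ / 2 := by positivity
    exact mul_le_mul_of_nonneg_left hgm_le this
  have h9 : ‖gaux - fderiv ℝ f θ v‖ ≤ ‖π‖ + ‖α • T‖ := by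
    rw [hdecomp]
    exact norm_add_le _ _
  have h10 : ‖α • T‖ ≤ M * c ^ 2 * ‖gaux‖ / 2 * ε := by
    rw [h7] at h6
    linarith
  have hfinal : ‖gaux - fderiv ℝ f θ v‖ ≤ lam⁻¹ * ε + M * c ^ 2 * ‖gaux‖ / 2 * ε := by
    linarith
  linarith [hfinal]
end

section
/- Let f: R^p → R be C³ with ∇f(θ*) = 0, and suppose H v ≠ 0 where H = ∇²f(θ*) and v ∈ R^p. Then as ε → 0, with g(ε) = ∇f(θ* + εv), we have π(Hv; g(ε)) → 0, where π(u; w) = u - (⟨u, w⟩/‖w‖²) w. -/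
open RealInnerProductSpace Filter

theorem bloop_projection_vanishes_near_stationary (p : ℕ)
    (f : EuclideanSpace ℝ (Fin p) → ℝ) (hC3 : ContDiff ℝ 3 f)
    (θs v : EuclideanSpace ℝ (Fin p)) (hcrit : gradient f θs = 0)
    (Hv : EuclideanSpace ℝ (Fin p)) (hHv : Hv = fderiv ℝ (gradient f) θs v)
    (hHv0 : Hv ≠ 0) :
    Tendsto (fun ε : ℝ =>
        Hv - (⟪Hv, gradient f (θs + ε • v)⟫ / ‖gradient f (θs + ε • v)‖ ^ 2) •
          gradient f (θs + ε • v))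
      (nhdsWithin 0 {0}ᶜ) (nhds 0) := by
  -- gradient f is differentiable at θs
  have hfd : DifferentiableAt ℝ (fderiv ℝ f) θs := by
    have h2 : ContDiff ℝ 1 (fderiv ℝ f) := hC3.fderiv_right (m := 1) (by norm_num)
    exact (h2.differentiable one_ne_zero).differentiableAt
  have hdiff : DifferentiableAt ℝ (gradient f) θs := by
    have : gradient f = fun x =>
        (InnerProductSpace.toDual ℝ (EuclideanSpace ℝ (Fin p))).symm (fderiv ℝ f x) := rfl
    rw [this]
    exact ((InnerProductSpace.toDual ℝ
      (EuclideanSpace ℝ (Fin p))).symm.toContinuousLinearEquiv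
      : _ ≃L[ℝ] _).differentiableAt.comp θs hfd
  -- φ(ε) = gradient f (θs + ε • v) has derivative Hv at 0
  set φ : ℝ → EuclideanSpace ℝ (Fin p) := fun ε => gradient f (θs + ε • v) with hφ
  have hline : HasDerivAt (fun ε : ℝ => θs + ε • v) v 0 := by
    simpa using ((hasDerivAt_id (0:ℝ)).smul_const v).const_add θs
  have hφd : HasDerivAt φ Hv 0 := by
    have h0 : θs + (0:ℝ) • v = θs := by simp
    have hF : HasFDerivAt (gradient f) (fderiv ℝ (gradient f) θs) (θs + (0:ℝ) • v) := by
      rw [h0]; exact hdiff.hasFDerivAt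
    have := hF.comp_hasDerivAt 0 hline
    rw [hHv]; exact this
  -- slope tends to Hv
  have hslope : Tendsto (fun ε : ℝ => ε⁻¹ • φ ε) (nhdsWithin 0 {0}ᶜ) (nhds Hv) := by
    have h := hasDerivAt_iff_tendsto_slope.mp hφd
    refine h.congr (fun ε => ?_)
    simp [slope, hφ, hcrit]
  -- F is continuous at Hv with value 0
  set F : EuclideanSpace ℝ (Fin p) → EuclideanSpace ℝ (Fin p) :=
    fun w => Hv - (⟪Hv, w⟫ / ‖w‖ ^ 2) • w with hFdef
  have hne : (‖Hv‖ : ℝ) ^ 2 ≠ 0 := pow_ne_zero _ (norm_ne_zero_iff.mpr hHv0)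
  have hFcont : ContinuousAt F Hv := by
    have c1 : Continuous fun w : EuclideanSpace ℝ (Fin p) => ⟪Hv, w⟫ :=
      continuous_const.inner continuous_id
    have c2 : Continuous fun w : EuclideanSpace ℝ (Fin p) => ‖w‖ ^ 2 :=
      continuous_norm.pow 2
    exact continuousAt_const.sub
      ((c1.continuousAt.div c2.continuousAt hne).smul continuousAt_id)
  have hFHv : F Hv = 0 := by
    have h1 : ⟪Hv, Hv⟫ = ‖Hv‖ ^ 2 := real_inner_self_eq_norm_sq Hv
    show Hv - (⟪Hv, Hv⟫ / ‖Hv‖ ^ 2) • Hv = 0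
    rw [h1, div_self hne, one_smul, sub_self]
  have hcomp : Tendsto (fun ε => F (ε⁻¹ • φ ε)) (nhdsWithin 0 {0}ᶜ) (nhds 0) := by
    rw [← hFHv]
    exact hFcont.tendsto.comp hslope
  refine hcomp.congr' ?_
  filter_upwards [self_mem_nhdsWithin] with ε (hε : ε ≠ 0)
  show F (ε⁻¹ • φ ε) = Hv - (⟪Hv, φ ε⟫ / ‖φ ε‖ ^ 2) • φ ε
  simp only [hFdef, real_inner_smul_right, norm_smul, mul_pow, norm_inv, Real.norm_eq_abs,
    smul_smul]
  congr 1
  by_cases hw : φ ε = 0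
  · simp [hw]
  · have hwn : (‖φ ε‖ : ℝ) ^ 2 ≠ 0 := pow_ne_zero _ (norm_ne_zero_iff.mpr hw)
    congr 1
    field_simp [sq_abs]
    ring_nf
    simp [sq_abs]
end
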